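/- Let μ ∈ ℝ and let x, y, q, e : I → ℝ be differentiable functions on a real interval I with y(t) > 0 for all t ∈ I, satisfying the extended system x'(t) = e(t)·μ·q(t), y'(t) = y(t)²·(x(t) − q(t)), q'(t) = q(t)·(x(t) − q(t)), e'(t) = 0. Then the function t ↦ q(t)·exp(1/y(t)) is constant on I. In particular, if q(t₀) = exp(−1/y(t₀)) for some t₀ ∈ I, then q(t) = exp(−1/y(t)) for all t ∈ I. -/

import Mathlib

open Real

/-- Invariance of the set `Q = {q = exp(-1/y)}` for the extended model system
`x' = εμq, y' = y²(x-q), q' = q(x-q), ε' = 0`. -/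
theorem stmt0 (μ : ℝ) (I : Set ℝ) (hI : I.OrdConnected)
    (x y q e : ℝ → ℝ)
    (hy : ∀ t ∈ I, 0 < y t)
    (hx' : ∀ t ∈ I, HasDerivWithinAt x (e t * μ * q t) I t)
    (hy' : ∀ t ∈ I, HasDerivWithinAt y ((y t) ^ 2 * (x t - q t)) I t)
    (hq' : ∀ t ∈ I, HasDerivWithinAt q (q t * (x t - q t)) I t)
    (he' : ∀ t ∈ I, HasDerivWithinAt e 0 I t) :
    (∀ s ∈ I, ∀ t ∈ I, q s * Real.exp (1 / y s) = q t * Real.exp (1 / y t)) ∧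
    (∀ t₀ ∈ I, q t₀ = Real.exp (-(1 / y t₀)) →
      ∀ t ∈ I, q t = Real.exp (-(1 / y t))) := by
  have hg' : ∀ t ∈ I,
      HasDerivWithinAt (fun t => q t * Real.exp (1 / y t)) 0 I t := by
    intro t ht
    have hyne : y t ≠ 0 := (hy t ht).ne'
    have h1' : HasDerivWithinAt (fun s => 1 / y s) (-(x t - q t)) I t := by
      simp only [one_div]
      have : HasDerivWithinAt (fun s => (y s)⁻¹) _ I t := (hy' t ht).inv hyne
      convert this using 1
      field_simp
    have h2 : HasDerivWithinAt (fun s => Real.exp (1 / y s))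
        (Real.exp (1 / y t) * (-(x t - q t))) I t := by
      simpa [mul_comm, Function.comp_def] using (Real.hasDerivAt_exp (1 / y t)).comp_hasDerivWithinAt t h1'
    have : HasDerivWithinAt (fun t => q t * Real.exp (1 / y t)) _ I t := (hq' t ht).mul h2
    convert this using 1
    ring
  have hconst : ∀ s ∈ I, ∀ t ∈ I,
      q s * Real.exp (1 / y s) = q t * Real.exp (1 / y t) := by
    intro s hs t ht
    have hcv : Convex ℝ I := hI.convex
    have h3 := hcv.norm_image_sub_le_of_norm_hasFDerivWithin_le
      (f' := fun _ => (0 : ℝ →L[ℝ] ℝ)) (C := 0)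
      (fun u hu => (hg' u hu).hasFDerivWithinAt.congr_fderiv (by ext; simp))
      (fun u hu => by simp) ht hs
    rw [← sub_eq_zero]
    exact norm_le_zero_iff.mp (by simpa using h3)
  refine ⟨hconst, ?_⟩
  intro t₀ ht₀ h0 t ht
  have h := hconst t ht t₀ ht₀
  rw [h0, ← Real.exp_add, neg_add_cancel, Real.exp_zero] at h
  rw [Real.exp_neg]
  field_simp
  linarith [h]
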